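/- Orthogonality of distinct simple modes of the elliptic membrane: let c, λ, λ', R, R', ϑ be real numbers with ϑ > 0. Let P, P̃ : ℝ → ℝ be twice continuously differentiable 2π-periodic functions with P'' + (R − 2λ²c²·cos 2α)·P = 0 and P̃'' + (R' − 2λ'²c²·cos 2α)·P̃ = 0. Let Q, Q̃ : ℝ → ℝ be twice continuously differentiable functions on [0, ϑ] with Q'' − (R − 2λ²c²·cosh 2β)·Q = 0 and Q̃'' − (R' − 2λ'²c²·cosh 2β)·Q̃ = 0, with Q(ϑ) = Q̃(ϑ) = 0, and with either Q(0) = Q̃(0) = 0 or Q'(0) = Q̃'(0) = 0. If (λ², R) ≠ (λ'², R'), then ∫₀^{ϑ} ∫₀^{2π} (cosh 2β − cos 2α)·P(α)·P̃(α)·Q(β)·Q̃(β) dα dβ = 0. -/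

import Mathlib

open Real intervalIntegral

private lemma c2_facts (f : ℝ → ℝ) (hf : ContDiff ℝ 2 f) :
    Differentiable ℝ f ∧ Differentiable ℝ (deriv f) ∧ Continuous (deriv (deriv f)) := by
  have h : ContDiff ℝ ((1 : WithTop ℕ∞) + 1) f := by
    have : ((1 : WithTop ℕ∞) + 1) = 2 := by norm_num
    rw [this]; exact hf
  rcases contDiff_succ_iff_deriv.mp h with ⟨h1, -, h2⟩
  rcases contDiff_one_iff_deriv.mp h2 with ⟨h3, h4⟩
  exact ⟨h1, h3, h4⟩

private lemma zero_of_integral_nonneg_eq_zero (f : ℝ → ℝ) (hf : Continuous f)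
    (hnn : ∀ x, 0 ≤ f x) {a b : ℝ} (hab : a < b)
    (hint : (∫ x in a..b, f x) = 0) : ∀ x ∈ Set.Icc a b, f x = 0 := by
  intro x₀ hx₀
  by_contra hne
  have hpos : 0 < f x₀ := lt_of_le_of_ne (hnn x₀) (Ne.symm hne)
  obtain ⟨δ, hδ, hball⟩ := Metric.continuousAt_iff.mp hf.continuousAt (f x₀ / 2) (by linarith)
  set c := max a (x₀ - δ / 2) with hc
  set d := min b (x₀ + δ / 2) with hd
  have hac : a ≤ c := le_max_left _ _
  have hdb : d ≤ b := min_le_left _ _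
  have hcd : c < d := by
    apply max_lt_iff.mpr
    constructor
    · exact lt_min hab (by linarith [hx₀.1])
    · exact lt_min (by linarith [hx₀.2]) (by linarith)
  have hlow : ∀ x ∈ Set.Icc c d, f x₀ / 2 ≤ f x := by
    intro x hx
    have h1 : x₀ - δ / 2 ≤ x := le_trans (le_max_right _ _) hx.1
    have h2 : x ≤ x₀ + δ / 2 := le_trans hx.2 (min_le_right _ _)
    have : dist x x₀ < δ := by
      rw [Real.dist_eq, abs_sub_lt_iff]; constructor <;> linarith
    have := hball this
    rw [Real.dist_eq, abs_sub_lt_iff] at this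
    linarith [this.1, this.2]
  have hi : ∀ u v : ℝ, IntervalIntegrable f MeasureTheory.volume u v :=
    fun u v => hf.intervalIntegrable u v
  have hsplit : (∫ x in a..c, f x) + (∫ x in c..d, f x) + (∫ x in d..b, f x)
      = ∫ x in a..b, f x := by
    rw [integral_add_adjacent_intervals (hi a c) (hi c d),
      integral_add_adjacent_intervals (hi a d) (hi d b)]
  have h1 : 0 ≤ ∫ x in a..c, f x := integral_nonneg hac (fun x _ => hnn x)
  have h2 : 0 ≤ ∫ x in d..b, f x := integral_nonneg hdb (fun x _ => hnn x)
  have h3 : (d - c) * (f x₀ / 2) ≤ ∫ x in c..d, f x := by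
    have := integral_mono_on hcd.le (intervalIntegrable_const) (hi c d) hlow
    rwa [integral_const, smul_eq_mul] at this
  have : 0 < (d - c) * (f x₀ / 2) := mul_pos (by linarith) (by linarith)
  linarith [hsplit, hint]

set_option maxHeartbeats 1600000 in
/-- orthogonality of distinct simple modes of the elliptic membrane. -/
theorem elliptic_membrane_modes_orthogonal
    (c lam lam' R R' ϑ : ℝ) (hϑ : 0 < ϑ) (P Pt Q Qt : ℝ → ℝ)
    (hP : ContDiff ℝ 2 P) (hPt : ContDiff ℝ 2 Pt)
    (hPper : Function.Periodic P (2 * π)) (hPtper : Function.Periodic Pt (2 * π))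
    (hPode : ∀ α : ℝ,
      deriv (deriv P) α + (R - 2 * lam ^ 2 * c ^ 2 * Real.cos (2 * α)) * P α = 0)
    (hPtode : ∀ α : ℝ,
      deriv (deriv Pt) α + (R' - 2 * lam' ^ 2 * c ^ 2 * Real.cos (2 * α)) * Pt α = 0)
    (hQ : ContDiff ℝ 2 Q) (hQt : ContDiff ℝ 2 Qt)
    (hQode : ∀ β ∈ Set.Icc (0 : ℝ) ϑ,
      deriv (deriv Q) β - (R - 2 * lam ^ 2 * c ^ 2 * Real.cosh (2 * β)) * Q β = 0)
    (hQtode : ∀ β ∈ Set.Icc (0 : ℝ) ϑ,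
      deriv (deriv Qt) β - (R' - 2 * lam' ^ 2 * c ^ 2 * Real.cosh (2 * β)) * Qt β = 0)
    (hQϑ : Q ϑ = 0) (hQtϑ : Qt ϑ = 0)
    (hbc : (Q 0 = 0 ∧ Qt 0 = 0) ∨ (deriv Q 0 = 0 ∧ deriv Qt 0 = 0))
    (hne : ¬(lam ^ 2 = lam' ^ 2 ∧ R = R')) :
    ∫ β in (0 : ℝ)..ϑ, ∫ α in (0 : ℝ)..(2 * π),
      (Real.cosh (2 * β) - Real.cos (2 * α)) * P α * Pt α * Q β * Qt β = 0 := by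
  obtain ⟨hPd, hPd1, hPcc⟩ := c2_facts P hP
  obtain ⟨hPtd, hPtd1, hPtcc⟩ := c2_facts Pt hPt
  obtain ⟨hQd, hQd1, hQcc⟩ := c2_facts Q hQ
  obtain ⟨hQtd, hQtd1, hQtcc⟩ := c2_facts Qt hQt
  have hPc : Continuous P := hPd.continuous
  have hPtc : Continuous Pt := hPtd.continuous
  have hQc : Continuous Q := hQd.continuous
  have hQtc : Continuous Qt := hQtd.continuous
  have hP'c : Continuous (deriv P) := hPd1.continuous
  have hPt'c : Continuous (deriv Pt) := hPtd1.continuous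
  have hQ'c : Continuous (deriv Q) := hQd1.continuous
  have hQt'c : Continuous (deriv Qt) := hQtd1.continuous
  have hcos2 : Continuous fun x : ℝ => Real.cos (2 * x) :=
    Real.continuous_cos.comp (continuous_const.mul continuous_id)
  have hcosh2 : Continuous fun x : ℝ => Real.cosh (2 * x) :=
    Real.continuous_cosh.comp (continuous_const.mul continuous_id)
  set k := 2 * lam ^ 2 * c ^ 2 with hkdef
  set k' := 2 * lam' ^ 2 * c ^ 2 with hk'def
  set A := ∫ α in (0:ℝ)..(2*π), P α * Pt α with hA
  set B := ∫ α in (0:ℝ)..(2*π), Real.cos (2*α) * (P α * Pt α) with hB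
  set C1 := ∫ β in (0:ℝ)..ϑ, Q β * Qt β with hC
  set D1 := ∫ β in (0:ℝ)..ϑ, Real.cosh (2*β) * (Q β * Qt β) with hD
  have huIcc : Set.uIcc (0:ℝ) ϑ = Set.Icc 0 ϑ := Set.uIcc_of_le hϑ.le
  -- Step 1: reduce to A * D1 - B * C1
  have key : (∫ β in (0 : ℝ)..ϑ, ∫ α in (0 : ℝ)..(2 * π),
      (Real.cosh (2 * β) - Real.cos (2 * α)) * P α * Pt α * Q β * Qt β)
      = A * D1 - B * C1 := by
    have hin : ∀ β : ℝ, (∫ α in (0:ℝ)..(2 * π),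
        (Real.cosh (2 * β) - Real.cos (2 * α)) * P α * Pt α * Q β * Qt β)
        = A * (Real.cosh (2*β) * (Q β * Qt β)) - B * (Q β * Qt β) := by
      intro β
      rw [intervalIntegral.integral_congr
        (g := fun α => (Q β * Qt β * Real.cosh (2*β)) * (P α * Pt α)
          - (Q β * Qt β) * (Real.cos (2*α) * (P α * Pt α)))
        (fun α _ => by ring)]
      rw [intervalIntegral.integral_sub
        (f := fun α => Q β * Qt β * Real.cosh (2*β) * (P α * Pt α))
        (g := fun α => Q β * Qt β * (Real.cos (2*α) * (P α * Pt α)))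
        ((continuous_const.mul (hPc.mul hPtc)).intervalIntegrable _ _)
        ((continuous_const.mul (hcos2.mul (hPc.mul hPtc))).intervalIntegrable _ _),
        intervalIntegral.integral_const_mul, intervalIntegral.integral_const_mul]
      ring
    rw [intervalIntegral.integral_congr (g := fun β =>
      A * (Real.cosh (2*β) * (Q β * Qt β)) - B * (Q β * Qt β)) (fun β _ => hin β)]
    rw [intervalIntegral.integral_sub
      (f := fun β => A * (Real.cosh (2*β) * (Q β * Qt β))) (g := fun β => B * (Q β * Qt β))
      ((continuous_const.mul (hcosh2.mul (hQc.mul hQtc))).intervalIntegrable _ _)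
      ((continuous_const.mul (hQc.mul hQtc)).intervalIntegrable _ _),
      intervalIntegral.integral_const_mul, intervalIntegral.integral_const_mul]
  rw [key]
  -- periodicity of values and derivatives
  have hP2π : P (2*π) = P 0 := by simpa using hPper 0
  have hPt2π : Pt (2*π) = Pt 0 := by simpa using hPtper 0
  have hP'2π : deriv P (2*π) = deriv P 0 := by
    have hfun : (fun x => P (x + 2*π)) = P := funext hPper
    have h := deriv_comp_add_const P (2*π) 0
    rw [hfun] at h
    rw [show (2*π:ℝ) = 0 + 2*π by ring]
    exact h.symm
  have hPt'2π : deriv Pt (2*π) = deriv Pt 0 := by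
    have hfun : (fun x => Pt (x + 2*π)) = Pt := funext hPtper
    have h := deriv_comp_add_const Pt (2*π) 0
    rw [hfun] at h
    rw [show (2*π:ℝ) = 0 + 2*π by ring]
    exact h.symm
  -- Wronskian identity for P, Pt
  have hid1 : (R' - R) * A + (k - k') * B = 0 := by
    have hW : ∀ x : ℝ, HasDerivAt (fun y => deriv P y * Pt y - P y * deriv Pt y)
        ((R' - R) * (P x * Pt x) + (k - k') * (Real.cos (2*x) * (P x * Pt x))) x := by
      intro x
      have h12 := ((hPd1 x).hasDerivAt.mul (hPtd x).hasDerivAt).sub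
        ((hPd x).hasDerivAt.mul (hPtd1 x).hasDerivAt)
      have heq : (deriv (deriv P) x * Pt x + deriv P x * deriv Pt x)
          - (deriv P x * deriv Pt x + P x * deriv (deriv Pt) x)
          = (R' - R) * (P x * Pt x) + (k - k') * (Real.cos (2*x) * (P x * Pt x)) := by
        linear_combination Pt x * hPode x - P x * hPtode x
      exact heq ▸ h12
    have hWint := integral_eq_sub_of_hasDerivAt (f' := fun x =>
        (R' - R) * (P x * Pt x) + (k - k') * (Real.cos (2*x) * (P x * Pt x)))
      (fun x _ => hW x)
      (((continuous_const.mul (hPc.mul hPtc)).add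
        (continuous_const.mul (hcos2.mul (hPc.mul hPtc)))).intervalIntegrable 0 (2*π))
    rw [hP2π, hPt2π, hP'2π, hPt'2π, sub_self] at hWint
    rw [intervalIntegral.integral_add
      (f := fun x => (R' - R) * (P x * Pt x))
      (g := fun x => (k - k') * (Real.cos (2*x) * (P x * Pt x)))
      ((continuous_const.mul (hPc.mul hPtc)).intervalIntegrable _ _)
      ((continuous_const.mul (hcos2.mul (hPc.mul hPtc))).intervalIntegrable _ _),
      intervalIntegral.integral_const_mul, intervalIntegral.integral_const_mul] at hWint
    exact hWint
  -- Wronskian identity for Q, Qt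
  have hid2 : (R - R') * C1 - (k - k') * D1 = 0 := by
    have hV : ∀ x ∈ Set.Icc (0:ℝ) ϑ, HasDerivAt (fun y => deriv Q y * Qt y - Q y * deriv Qt y)
        ((R - R') * (Q x * Qt x) - (k - k') * (Real.cosh (2*x) * (Q x * Qt x))) x := by
      intro x hx
      have h12 := ((hQd1 x).hasDerivAt.mul (hQtd x).hasDerivAt).sub
        ((hQd x).hasDerivAt.mul (hQtd1 x).hasDerivAt)
      have heq : (deriv (deriv Q) x * Qt x + deriv Q x * deriv Qt x)
          - (deriv Q x * deriv Qt x + Q x * deriv (deriv Qt) x)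
          = (R - R') * (Q x * Qt x) - (k - k') * (Real.cosh (2*x) * (Q x * Qt x)) := by
        linear_combination Qt x * hQode x hx - Q x * hQtode x hx
      exact heq ▸ h12
    have hVint := integral_eq_sub_of_hasDerivAt (a := (0:ℝ)) (b := ϑ) (f' := fun x =>
        (R - R') * (Q x * Qt x) - (k - k') * (Real.cosh (2*x) * (Q x * Qt x)))
      (fun x hx => hV x (huIcc ▸ hx))
      (((continuous_const.mul (hQc.mul hQtc)).sub
        (continuous_const.mul (hcosh2.mul (hQc.mul hQtc)))).intervalIntegrable 0 ϑ)
    have hVϑ : deriv Q ϑ * Qt ϑ - Q ϑ * deriv Qt ϑ = 0 := by rw [hQϑ, hQtϑ]; ring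
    have hV0 : deriv Q 0 * Qt 0 - Q 0 * deriv Qt 0 = 0 := by
      rcases hbc with ⟨h1, h2⟩ | ⟨h1, h2⟩ <;> rw [h1, h2] <;> ring
    rw [hVϑ, hV0, sub_self] at hVint
    rw [intervalIntegral.integral_sub
      (f := fun x => (R - R') * (Q x * Qt x))
      (g := fun x => (k - k') * (Real.cosh (2*x) * (Q x * Qt x)))
      ((continuous_const.mul (hQc.mul hQtc)).intervalIntegrable _ _)
      ((continuous_const.mul (hcosh2.mul (hQc.mul hQtc))).intervalIntegrable _ _),
      intervalIntegral.integral_const_mul, intervalIntegral.integral_const_mul] at hVint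
    exact hVint
  rcases eq_or_ne R R' with hR | hR
  · rcases eq_or_ne k k' with hkk | hkk
    · -- degenerate case: k = k', R = R', hence c = 0
      have hll : lam ^ 2 ≠ lam' ^ 2 := fun h => hne ⟨h, hR⟩
      have h0 : (lam ^ 2 - lam' ^ 2) * (2 * c ^ 2) = 0 := by
        rw [hkdef, hk'def] at hkk; linear_combination hkk
      have hc2 : c ^ 2 = 0 := by
        rcases mul_eq_zero.mp h0 with h | h
        · exact absurd (by linarith : lam ^ 2 = lam' ^ 2) hll
        · linarith
      have hk0 : k = 0 := by rw [hkdef, hc2]; ring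
      rcases le_or_gt 0 R with hR0 | hR0
      · -- R ≥ 0 : Q vanishes on [0, ϑ]
        have hU : ∀ x ∈ Set.Icc (0:ℝ) ϑ, HasDerivAt (fun y => deriv Q y * Q y)
            (R * Q x ^ 2 + (deriv Q x) ^ 2) x := by
          intro x hx
          have h12 := (hQd1 x).hasDerivAt.mul (hQd x).hasDerivAt
          have heq : deriv (deriv Q) x * Q x + deriv Q x * deriv Q x
              = R * Q x ^ 2 + (deriv Q x) ^ 2 := by
            linear_combination Q x * hQode x hx - Real.cosh (2*x) * Q x ^ 2 * hk0
          exact heq ▸ h12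
        have hUint := integral_eq_sub_of_hasDerivAt (a := (0:ℝ)) (b := ϑ)
          (f' := fun x => R * Q x ^ 2 + (deriv Q x) ^ 2)
          (fun x hx => hU x (huIcc ▸ hx))
          (((continuous_const.mul (hQc.pow 2)).add ((hQ'c.pow 2))).intervalIntegrable 0 ϑ)
        have hU0 : deriv Q 0 * Q 0 = 0 := by
          rcases hbc with ⟨h1, _⟩ | ⟨h1, _⟩ <;> rw [h1] <;> ring
        rw [hQϑ, hU0, mul_zero, sub_zero] at hUint
        rw [intervalIntegral.integral_add
          (f := fun x => R * Q x ^ 2) (g := fun x => (deriv Q x) ^ 2)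
          ((continuous_const.mul (hQc.pow 2)).intervalIntegrable _ _)
          ((hQ'c.pow 2).intervalIntegrable _ _),
          intervalIntegral.integral_const_mul] at hUint
        have hq2 : 0 ≤ ∫ x in (0:ℝ)..ϑ, Q x ^ 2 :=
          integral_nonneg hϑ.le (fun x _ => sq_nonneg _)
        have hq'2 : 0 ≤ ∫ x in (0:ℝ)..ϑ, (deriv Q x) ^ 2 :=
          integral_nonneg hϑ.le (fun x _ => sq_nonneg _)
        have hzero : (∫ x in (0:ℝ)..ϑ, (deriv Q x) ^ 2) = 0 := by
          linarith [mul_nonneg hR0 hq2]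
        have hQ'0 : ∀ x ∈ Set.Icc (0:ℝ) ϑ, deriv Q x = 0 := by
          intro x hx
          have := zero_of_integral_nonneg_eq_zero (fun x => (deriv Q x) ^ 2)
            (hQ'c.pow 2) (fun x => sq_nonneg _) hϑ hzero x hx
          exact pow_eq_zero_iff two_ne_zero |>.mp this
        have hQ0 : ∀ β ∈ Set.Icc (0:ℝ) ϑ, Q β = 0 := by
          intro β hβ
          have hsub : Set.uIcc β ϑ ⊆ Set.Icc 0 ϑ := by
            rw [Set.uIcc_of_le hβ.2]; exact Set.Icc_subset_Icc hβ.1 le_rfl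
          have hftc : (∫ x in β..ϑ, deriv Q x) = Q ϑ - Q β :=
            integral_eq_sub_of_hasDerivAt (fun x _ => (hQd x).hasDerivAt)
              (hQ'c.intervalIntegrable _ _)
          have hz : (∫ x in β..ϑ, deriv Q x) = 0 := by
            rw [intervalIntegral.integral_congr (g := fun _ => (0:ℝ))
              (fun x hx => hQ'0 x (hsub hx))]
            simp
          rw [hz, hQϑ] at hftc
          linarith
        have hC0 : C1 = 0 := by
          rw [hC, intervalIntegral.integral_congr (g := fun _ => (0:ℝ))
            (fun x hx => by rw [hQ0 x (huIcc ▸ hx)]; ring)]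
          simp
        have hD0 : D1 = 0 := by
          rw [hD, intervalIntegral.integral_congr (g := fun _ => (0:ℝ))
            (fun x hx => by rw [hQ0 x (huIcc ▸ hx)]; ring)]
          simp
        rw [hC0, hD0]; ring
      · -- R < 0 : P vanishes on [0, 2π]
        have h2π : (0:ℝ) < 2 * π := by linarith [Real.pi_pos]
        have hU : ∀ x : ℝ, HasDerivAt (fun y => deriv P y * P y)
            ((-R) * P x ^ 2 + (deriv P x) ^ 2) x := by
          intro x
          have h12 := (hPd1 x).hasDerivAt.mul (hPd x).hasDerivAt
          have heq : deriv (deriv P) x * P x + deriv P x * deriv P x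
              = (-R) * P x ^ 2 + (deriv P x) ^ 2 := by
            linear_combination P x * hPode x + Real.cos (2*x) * P x ^ 2 * hk0
          exact heq ▸ h12
        have hUint := integral_eq_sub_of_hasDerivAt (a := (0:ℝ)) (b := 2*π)
          (f' := fun x => (-R) * P x ^ 2 + (deriv P x) ^ 2)
          (fun x _ => hU x)
          (((continuous_const.mul (hPc.pow 2)).add ((hP'c.pow 2))).intervalIntegrable 0 (2*π))
        rw [hP2π, hP'2π, sub_self] at hUint
        rw [intervalIntegral.integral_add
          (f := fun x => (-R) * P x ^ 2) (g := fun x => (deriv P x) ^ 2)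
          ((continuous_const.mul (hPc.pow 2)).intervalIntegrable _ _)
          ((hP'c.pow 2).intervalIntegrable _ _),
          intervalIntegral.integral_const_mul] at hUint
        have hq2 : 0 ≤ ∫ x in (0:ℝ)..(2*π), P x ^ 2 :=
          integral_nonneg h2π.le (fun x _ => sq_nonneg _)
        have hq'2 : 0 ≤ ∫ x in (0:ℝ)..(2*π), (deriv P x) ^ 2 :=
          integral_nonneg h2π.le (fun x _ => sq_nonneg _)
        have hzero : (∫ x in (0:ℝ)..(2*π), P x ^ 2) = 0 := by
          have hm : (0:ℝ) ≤ (-R) * ∫ x in (0:ℝ)..(2*π), P x ^ 2 :=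
            mul_nonneg (by linarith) hq2
          have hz : (-R) * (∫ x in (0:ℝ)..(2*π), P x ^ 2) = 0 := by linarith
          exact (mul_eq_zero.mp hz).resolve_left (by intro h; linarith)
        have hP0 : ∀ x ∈ Set.Icc (0:ℝ) (2*π), P x = 0 := by
          intro x hx
          have := zero_of_integral_nonneg_eq_zero (fun x => P x ^ 2)
            (hPc.pow 2) (fun x => sq_nonneg _) h2π hzero x hx
          exact pow_eq_zero_iff two_ne_zero |>.mp this
        have huIcc2 : Set.uIcc (0:ℝ) (2*π) = Set.Icc 0 (2*π) := Set.uIcc_of_le h2π.le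
        have hA0 : A = 0 := by
          rw [hA, intervalIntegral.integral_congr (g := fun _ => (0:ℝ))
            (fun x hx => by rw [hP0 x (huIcc2 ▸ hx)]; ring)]
          simp
        have hB0 : B = 0 := by
          rw [hB, intervalIntegral.integral_congr (g := fun _ => (0:ℝ))
            (fun x hx => by rw [hP0 x (huIcc2 ▸ hx)]; ring)]
          simp
        rw [hA0, hB0]; ring
    · -- k ≠ k'
      have key2 : (k - k') * (A * D1 - B * C1) = 0 := by
        linear_combination (-(A)) * hid2 - C1 * hid1
      exact (mul_eq_zero.mp key2).resolve_left (sub_ne_zero.mpr hkk)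
  · -- R ≠ R'
    have key3 : (R - R') * (A * D1 - B * C1) = 0 := by
      linear_combination (-(D1)) * hid1 - B * hid2
    exact (mul_eq_zero.mp key3).resolve_left (sub_ne_zero.mpr hR)
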